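/- For every integer r ≥ 2 there exists a finite simple graph G such that χ(G) = r, G has no additive coloring over any finite abelian group of order r, and yet G has an additive coloring over the cyclic group ℤ_{r+1}. -/

import Mathlib

/-- The sum of the values of `f` over the neighborhood of `u` in `G`. -/
noncomputable def nsum {V : Type*} [Fintype V] {M : Type*} [AddCommMonoid M]
    (G : SimpleGraph V) (f : V → M) (u : V) : M :=
  letI := Classical.decRel G.Adj
  ∑ x ∈ G.neighborFinset u, f x

/-- `f` is an additive coloring of `G` with values in the abelian group `M`:
adjacent vertices have different neighborhood sums. -/
def IsAddColoring {V : Type*} [Fintype V] {M : Type*} [AddCommMonoid M]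
    (G : SimpleGraph V) (f : V → M) : Prop :=
  ∀ ⦃u v : V⦄, G.Adj u v → nsum G f u ≠ nsum G f v

open Finset SimpleGraph

lemma nsum_eq_sum {V : Type*} [Fintype V] {M : Type*} [AddCommMonoid M]
    (G : SimpleGraph V) [DecidableRel G.Adj] (f : V → M) (u : V) :
    nsum G f u = ∑ z : V, if G.Adj u z then f z else 0 := by
  rw [nsum, ← Finset.sum_filter]
  apply Finset.sum_congr _ (fun _ _ => rfl)
  ext z
  simp [SimpleGraph.mem_neighborFinset]

lemma nsum_map {V V' : Type*} [Fintype V] [Fintype V'] {M : Type*} [AddCommMonoid M]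
    (G : SimpleGraph V) [DecidableRel G.Adj] (e : V ≃ V') (f : V' → M) (w : V) :
    nsum (G.map e.toEmbedding) f (e w) = nsum G (f ∘ e) w := by
  classical
  rw [nsum_eq_sum, nsum_eq_sum, ← Equiv.sum_comp e]
  refine Finset.sum_congr rfl fun z _ => ?_
  have hiff : (SimpleGraph.map e.toEmbedding G).Adj (e w) (e z) ↔ G.Adj w z :=
    SimpleGraph.map_adj_apply
  simp only [hiff]
  rfl

lemma isAddColoring_map {V V' : Type*} [Fintype V] [Fintype V'] {M : Type*} [AddCommMonoid M]
    (G : SimpleGraph V) [DecidableRel G.Adj] (e : V ≃ V') (f : V' → M) :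
    IsAddColoring (G.map e.toEmbedding) f ↔ IsAddColoring G (f ∘ e) := by
  constructor
  · intro h a b hab
    have : (G.map e.toEmbedding).Adj (e a) (e b) := SimpleGraph.map_adj_apply.2 hab
    have := h this
    rwa [nsum_map, nsum_map] at this
  · intro h a b hab
    rw [SimpleGraph.map_adj] at hab
    obtain ⟨a', b', hab', rfl, rfl⟩ := hab
    show nsum (G.map e.toEmbedding) f (e a') ≠ nsum (G.map e.toEmbedding) f (e b')
    rw [nsum_map, nsum_map]
    exact h hab'


abbrev Wr (r : ℕ) := (Fin r ⊕ Fin r) ⊕ Fin 4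

namespace Gadget

variable {r : ℕ}

abbrev A (i : Fin r) : Wr r := Sum.inl (Sum.inl i)
abbrev B (i : Fin r) : Wr r := Sum.inl (Sum.inr i)
abbrev P (k : Fin 4) : Wr r := Sum.inr k

def adjFun (r : ℕ) : Wr r → Wr r → Prop
  | Sum.inl (Sum.inl i), Sum.inl (Sum.inl j) => i ≠ j
  | Sum.inl (Sum.inr i), Sum.inl (Sum.inr j) => i ≠ j
  | Sum.inl (Sum.inl i), Sum.inr k => k = 0 ∧ (i : ℕ) ≠ r - 1
  | Sum.inr k, Sum.inl (Sum.inl i) => k = 0 ∧ (i : ℕ) ≠ r - 1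
  | Sum.inl (Sum.inr i), Sum.inr k => k = 1 ∧ (i : ℕ) ≠ r - 1
  | Sum.inr k, Sum.inl (Sum.inr i) => k = 1 ∧ (i : ℕ) ≠ r - 1
  | Sum.inr k, Sum.inr l => k ≠ l ∧ (k : ℕ) + (l : ℕ) ≠ 3
  | _, _ => False

def Gr (r : ℕ) : SimpleGraph (Wr r) where
  Adj := adjFun r
  symm := by
    constructor
    intro w z h
    rcases w with (i | i) | k <;> rcases z with (j | j) | l <;>
      simp only [adjFun] at h ⊢ <;>
      first | tauto | (obtain ⟨h1, h2⟩ := h; exact ⟨h1.symm, by omega⟩)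
  loopless := by
    constructor
    intro w h
    rcases w with (i | i) | k <;> simp only [adjFun] at h <;> tauto

instance : DecidableRel (Gr r).Adj := fun w z => by
  rcases w with (i | i) | k <;> rcases z with (j | j) | l <;>
    · show Decidable _
      simp only [Gr, adjFun]
      infer_instance

lemma adj_AA {i j : Fin r} : (Gr r).Adj (A i) (A j) ↔ i ≠ j := Iff.rfl
lemma adj_BB {i j : Fin r} : (Gr r).Adj (B i) (B j) ↔ i ≠ j := Iff.rfl
lemma adj_AB {i j : Fin r} : (Gr r).Adj (A i) (B j) ↔ False := Iff.rfl
lemma adj_BA {i j : Fin r} : (Gr r).Adj (B i) (A j) ↔ False := Iff.rfl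
lemma adj_AP {i : Fin r} {k : Fin 4} :
    (Gr r).Adj (A i) (P k) ↔ k = 0 ∧ (i : ℕ) ≠ r - 1 := Iff.rfl
lemma adj_PA {i : Fin r} {k : Fin 4} :
    (Gr r).Adj (P k) (A i) ↔ k = 0 ∧ (i : ℕ) ≠ r - 1 := Iff.rfl
lemma adj_BP {i : Fin r} {k : Fin 4} :
    (Gr r).Adj (B i) (P k) ↔ k = 1 ∧ (i : ℕ) ≠ r - 1 := Iff.rfl
lemma adj_PB {i : Fin r} {k : Fin 4} :
    (Gr r).Adj (P k) (B i) ↔ k = 1 ∧ (i : ℕ) ≠ r - 1 := Iff.rfl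
lemma adj_PP {k l : Fin 4} :
    (Gr r).Adj (P k) (P l) ↔ k ≠ l ∧ (k : ℕ) + (l : ℕ) ≠ 3 := Iff.rfl

variable {M : Type*} [AddCommGroup M]

lemma sum_ite_ne {m : ℕ} (g : Fin m → M) (i : Fin m) :
    (∑ j, if i ≠ j then g j else 0) = (∑ j, g j) - g i := by
  have h : ∀ j : Fin m, (if i ≠ j then g j else 0) = g j - (if i = j then g j else 0) := by
    intro j; by_cases h : i = j <;> simp [h]
  simp_rw [h]
  rw [Finset.sum_sub_distrib, Finset.sum_ite_eq]
  simp


variable (f : Wr r → M)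

lemma nsum_A (i : Fin r) :
    nsum (Gr r) f (A i)
      = ((∑ j, f (A j)) - f (A i)) + (if (i : ℕ) ≠ r - 1 then f (P 0) else 0) := by
  rw [nsum_eq_sum, Fintype.sum_sum_type, Fintype.sum_sum_type, Fin.sum_univ_four]
  rw [show (∑ j : Fin r, if (Gr r).Adj (A i) (A j) then f (A j) else 0)
        = (∑ j, f (A j)) - f (A i) from by
    simp only [adj_AA]; exact sum_ite_ne (fun j => f (A j)) i]
  simp only [adj_AB, adj_AP, if_false]
  have h1 : ¬ ((1 : Fin 4) = 0 ∧ (i : ℕ) ≠ r - 1) := by rintro ⟨h, -⟩; exact absurd h (by decide)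
  have h2 : ¬ ((2 : Fin 4) = 0 ∧ (i : ℕ) ≠ r - 1) := by rintro ⟨h, -⟩; exact absurd h (by decide)
  have h3 : ¬ ((3 : Fin 4) = 0 ∧ (i : ℕ) ≠ r - 1) := by rintro ⟨h, -⟩; exact absurd h (by decide)
  rw [if_neg h1, if_neg h2, if_neg h3]
  simp only [Finset.sum_const_zero, true_and]
  abel

lemma nsum_B (i : Fin r) :
    nsum (Gr r) f (B i)
      = ((∑ j, f (B j)) - f (B i)) + (if (i : ℕ) ≠ r - 1 then f (P 1) else 0) := by
  rw [nsum_eq_sum, Fintype.sum_sum_type, Fintype.sum_sum_type, Fin.sum_univ_four]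
  rw [show (∑ j : Fin r, if (Gr r).Adj (B i) (B j) then f (B j) else 0)
        = (∑ j, f (B j)) - f (B i) from by
    simp only [adj_BB]; exact sum_ite_ne (fun j => f (B j)) i]
  simp only [adj_BA, adj_BP, if_false]
  have h0 : ¬ ((0 : Fin 4) = 1 ∧ (i : ℕ) ≠ r - 1) := by rintro ⟨h, -⟩; exact absurd h (by decide)
  have h2 : ¬ ((2 : Fin 4) = 1 ∧ (i : ℕ) ≠ r - 1) := by rintro ⟨h, -⟩; exact absurd h (by decide)
  have h3 : ¬ ((3 : Fin 4) = 1 ∧ (i : ℕ) ≠ r - 1) := by rintro ⟨h, -⟩; exact absurd h (by decide)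
  rw [if_neg h0, if_neg h2, if_neg h3]
  simp only [Finset.sum_const_zero, true_and]
  abel

lemma nsum_u (lst : Fin r) (hl : (lst : ℕ) = r - 1) :
    nsum (Gr r) f (P 0)
      = ((∑ j, f (A j)) - f (A lst)) + (f (P 1) + f (P 2)) := by
  rw [nsum_eq_sum, Fintype.sum_sum_type, Fintype.sum_sum_type, Fin.sum_univ_four]
  rw [show (∑ j : Fin r, if (Gr r).Adj (P 0) (A j) then f (A j) else 0)
        = (∑ j, f (A j)) - f (A lst) from by
    have he : ∀ j : Fin r, ((Gr r).Adj (P 0) (A j)) ↔ (lst ≠ j) := by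
      intro j
      rw [adj_PA]
      constructor
      · rintro ⟨-, h⟩ hc; exact h (by rw [← hc, hl])
      · intro h; exact ⟨rfl, fun hc => h (Fin.ext (by rw [hl, hc]))⟩
    simp_rw [he]
    exact sum_ite_ne (fun j => f (A j)) _]
  have hB : ∀ j : Fin r, ¬ (Gr r).Adj (P 0) (B j) := by
    intro j hc
    rw [adj_PB] at hc
    exact absurd hc.1 (by decide)
  rw [Finset.sum_congr rfl (fun j _ => if_neg (hB j))]
  simp only [adj_PP]
  rw [if_neg (by rintro ⟨h, -⟩; exact h rfl),
      if_pos (⟨by decide, by decide⟩ : (0 : Fin 4) ≠ 1 ∧ ((0 : Fin 4) : ℕ) + ((1 : Fin 4) : ℕ) ≠ 3),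
      if_pos (⟨by decide, by decide⟩ : (0 : Fin 4) ≠ 2 ∧ ((0 : Fin 4) : ℕ) + ((2 : Fin 4) : ℕ) ≠ 3),
      if_neg (by rintro ⟨-, h⟩; exact h (by decide))]
  simp only [Finset.sum_const_zero]
  abel

lemma nsum_v (lst : Fin r) (hl : (lst : ℕ) = r - 1) :
    nsum (Gr r) f (P 1)
      = ((∑ j, f (B j)) - f (B lst)) + (f (P 0) + f (P 3)) := by
  rw [nsum_eq_sum, Fintype.sum_sum_type, Fintype.sum_sum_type, Fin.sum_univ_four]
  rw [show (∑ j : Fin r, if (Gr r).Adj (P 1) (B j) then f (B j) else 0)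
        = (∑ j, f (B j)) - f (B lst) from by
    have he : ∀ j : Fin r, ((Gr r).Adj (P 1) (B j)) ↔ (lst ≠ j) := by
      intro j
      rw [adj_PB]
      constructor
      · rintro ⟨-, h⟩ hc; exact h (by rw [← hc, hl])
      · intro h; exact ⟨rfl, fun hc => h (Fin.ext (by rw [hl, hc]))⟩
    simp_rw [he]
    exact sum_ite_ne (fun j => f (B j)) _]
  have hA : ∀ j : Fin r, ¬ (Gr r).Adj (P 1) (A j) := by
    intro j hc
    rw [adj_PA] at hc
    exact absurd hc.1 (by decide)
  rw [Finset.sum_congr rfl (fun j _ => if_neg (hA j))]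
  simp only [adj_PP]
  rw [if_pos (⟨by decide, by decide⟩ : (1 : Fin 4) ≠ 0 ∧ ((1 : Fin 4) : ℕ) + ((0 : Fin 4) : ℕ) ≠ 3),
      if_neg (by rintro ⟨h, -⟩; exact h rfl),
      if_neg (by rintro ⟨-, h⟩; exact h (by decide)),
      if_pos (⟨by decide, by decide⟩ : (1 : Fin 4) ≠ 3 ∧ ((1 : Fin 4) : ℕ) + ((3 : Fin 4) : ℕ) ≠ 3)]
  simp only [Finset.sum_const_zero]
  abel

lemma nsum_x :
    nsum (Gr r) f (P 2) = f (P 0) + f (P 3) := by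
  rw [nsum_eq_sum, Fintype.sum_sum_type, Fintype.sum_sum_type, Fin.sum_univ_four]
  have hA : ∀ j : Fin r, ¬ (Gr r).Adj (P 2) (A j) := by
    intro j hc; rw [adj_PA] at hc; exact absurd hc.1 (by decide)
  have hB : ∀ j : Fin r, ¬ (Gr r).Adj (P 2) (B j) := by
    intro j hc; rw [adj_PB] at hc; exact absurd hc.1 (by decide)
  rw [Finset.sum_congr rfl (fun j _ => if_neg (hA j)),
      Finset.sum_congr rfl (fun j _ => if_neg (hB j))]
  simp only [adj_PP]
  rw [if_pos (⟨by decide, by decide⟩ : (2 : Fin 4) ≠ 0 ∧ ((2 : Fin 4) : ℕ) + ((0 : Fin 4) : ℕ) ≠ 3),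
      if_neg (by rintro ⟨-, h⟩; exact h (by decide)),
      if_neg (by rintro ⟨h, -⟩; exact h rfl),
      if_pos (⟨by decide, by decide⟩ : (2 : Fin 4) ≠ 3 ∧ ((2 : Fin 4) : ℕ) + ((3 : Fin 4) : ℕ) ≠ 3)]
  simp only [Finset.sum_const_zero]
  abel

lemma nsum_y :
    nsum (Gr r) f (P 3) = f (P 1) + f (P 2) := by
  rw [nsum_eq_sum, Fintype.sum_sum_type, Fintype.sum_sum_type, Fin.sum_univ_four]
  have hA : ∀ j : Fin r, ¬ (Gr r).Adj (P 3) (A j) := by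
    intro j hc; rw [adj_PA] at hc; exact absurd hc.1 (by decide)
  have hB : ∀ j : Fin r, ¬ (Gr r).Adj (P 3) (B j) := by
    intro j hc; rw [adj_PB] at hc; exact absurd hc.1 (by decide)
  rw [Finset.sum_congr rfl (fun j _ => if_neg (hA j)),
      Finset.sum_congr rfl (fun j _ => if_neg (hB j))]
  simp only [adj_PP]
  rw [if_neg (by rintro ⟨-, h⟩; exact h (by decide)),
      if_pos (⟨by decide, by decide⟩ : (3 : Fin 4) ≠ 1 ∧ ((3 : Fin 4) : ℕ) + ((1 : Fin 4) : ℕ) ≠ 3),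
      if_pos (⟨by decide, by decide⟩ : (3 : Fin 4) ≠ 2 ∧ ((3 : Fin 4) : ℕ) + ((2 : Fin 4) : ℕ) ≠ 3),
      if_neg (by rintro ⟨h, -⟩; exact h rfl)]
  simp only [Finset.sum_const_zero]
  abel

/-- Over any abelian group of order `r` there is no additive coloring of `Gr r`. -/
theorem no_coloring (hr : 2 ≤ r) (Γ : Type*) [AddCommGroup Γ] [Fintype Γ]
    (hcard : Fintype.card Γ = r) (g : Wr r → Γ) (hg : IsAddColoring (Gr r) g) : False := by
  have hlt : r - 1 < r := by omega
  set lst : Fin r := ⟨r - 1, hlt⟩ with hlst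
  have hl : (lst : ℕ) = r - 1 := rfl
  have hlast : ¬ ((lst : ℕ) ≠ r - 1) := fun h => h rfl
  -- A side: g (P 2) + g (P 1) = 0
  have keyA : g (P 2) + g (P 1) = 0 := by
    by_contra hne
    have h1 : ∀ i j : Fin r, (i : ℕ) ≠ r - 1 → (j : ℕ) ≠ r - 1 → i ≠ j →
        g (A i) ≠ g (A j) := by
      intro i j hi hj hij heq
      refine hg (adj_AA.2 hij) ?_
      rw [nsum_A, nsum_A, if_pos hi, if_pos hj, heq]
    have h2 : ∀ i : Fin r, (i : ℕ) ≠ r - 1 → g (A i) ≠ g (A lst) + g (P 0) := by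
      intro i hi heq
      have hadj : (Gr r).Adj (A i) (A lst) := adj_AA.2 (fun hc => hi (by rw [hc]))
      refine hg hadj ?_
      rw [nsum_A, nsum_A, if_pos hi, if_neg hlast, heq]
      abel
    have h3 : ∀ i : Fin r, (i : ℕ) ≠ r - 1 →
        g (A i) ≠ g (A lst) + g (P 0) - (g (P 2) + g (P 1)) := by
      intro i hi heq
      have hadj : (Gr r).Adj (P 0) (A i) := adj_PA.2 ⟨rfl, hi⟩
      refine hg hadj ?_
      rw [nsum_u g lst hl, nsum_A, if_pos hi, heq]
      abel
    set c1 := g (A lst) + g (P 0) with hc1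
    set c2 := g (A lst) + g (P 0) - (g (P 2) + g (P 1)) with hc2
    have hcc : c1 ≠ c2 := by
      rw [hc1, hc2]
      intro hcon
      apply hne
      have h' : g (P 2) + g (P 1)
          = (g (A lst) + g (P 0)) - (g (A lst) + g (P 0) - (g (P 2) + g (P 1))) := by abel
      rw [← hcon, sub_self] at h'
      exact h'
    -- build an injection from Fin (r+1) into Γ
    have hinj : Function.Injective (fun t : Fin (r + 1) =>
        if h : (t : ℕ) < r - 1 then g (A ⟨t, by omega⟩) else
          if (t : ℕ) = r - 1 then c1 else c2) := by
      intro s t heq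
      by_contra hst
      have hvne : (s : ℕ) ≠ (t : ℕ) := fun hc => hst (Fin.ext hc)
      simp only at heq
      by_cases hs1 : (s : ℕ) < r - 1 <;> by_cases ht1 : (t : ℕ) < r - 1
      · rw [dif_pos hs1, dif_pos ht1] at heq
        exact h1 ⟨s, by omega⟩ ⟨t, by omega⟩ (by simpa using by omega)
          (by simpa using by omega) (fun hc => hvne (by simpa using congrArg Fin.val hc)) heq
      · rw [dif_pos hs1, dif_neg ht1] at heq
        by_cases ht2 : (t : ℕ) = r - 1
        · rw [if_pos ht2] at heq
          exact h2 ⟨s, by omega⟩ (by simpa using by omega) heq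
        · rw [if_neg ht2] at heq
          exact h3 ⟨s, by omega⟩ (by simpa using by omega) heq
      · rw [dif_neg hs1, dif_pos ht1] at heq
        by_cases hs2 : (s : ℕ) = r - 1
        · rw [if_pos hs2] at heq
          exact h2 ⟨t, by omega⟩ (by simpa using by omega) heq.symm
        · rw [if_neg hs2] at heq
          exact h3 ⟨t, by omega⟩ (by simpa using by omega) heq.symm
      · rw [dif_neg hs1, dif_neg ht1] at heq
        by_cases hs2 : (s : ℕ) = r - 1 <;> by_cases ht2 : (t : ℕ) = r - 1
        · exact hvne (by omega)
        · rw [if_pos hs2, if_neg ht2] at heq; exact hcc heq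
        · rw [if_neg hs2, if_pos ht2] at heq; exact hcc heq.symm
        · have hs3 : (s : ℕ) = r := by have := s.isLt; omega
          have ht3 : (t : ℕ) = r := by have := t.isLt; omega
          exact hvne (by omega)
    have hle := Fintype.card_le_of_injective _ hinj
    rw [Fintype.card_fin, hcard] at hle
    omega
  -- B side: g (P 0) + g (P 3) = 0
  have keyB : g (P 0) + g (P 3) = 0 := by
    by_contra hne
    have h1 : ∀ i j : Fin r, (i : ℕ) ≠ r - 1 → (j : ℕ) ≠ r - 1 → i ≠ j →
        g (B i) ≠ g (B j) := by
      intro i j hi hj hij heq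
      refine hg (adj_BB.2 hij) ?_
      rw [nsum_B, nsum_B, if_pos hi, if_pos hj, heq]
    have h2 : ∀ i : Fin r, (i : ℕ) ≠ r - 1 → g (B i) ≠ g (B lst) + g (P 1) := by
      intro i hi heq
      have hadj : (Gr r).Adj (B i) (B lst) := adj_BB.2 (fun hc => hi (by rw [hc]))
      refine hg hadj ?_
      rw [nsum_B, nsum_B, if_pos hi, if_neg hlast, heq]
      abel
    have h3 : ∀ i : Fin r, (i : ℕ) ≠ r - 1 →
        g (B i) ≠ g (B lst) + g (P 1) - (g (P 0) + g (P 3)) := by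
      intro i hi heq
      have hadj : (Gr r).Adj (P 1) (B i) := adj_PB.2 ⟨rfl, hi⟩
      refine hg hadj ?_
      rw [nsum_v g lst hl, nsum_B, if_pos hi, heq]
      abel
    set c1 := g (B lst) + g (P 1) with hc1
    set c2 := g (B lst) + g (P 1) - (g (P 0) + g (P 3)) with hc2
    have hcc : c1 ≠ c2 := by
      rw [hc1, hc2]
      intro hcon
      apply hne
      have h' : g (P 0) + g (P 3)
          = (g (B lst) + g (P 1)) - (g (B lst) + g (P 1) - (g (P 0) + g (P 3))) := by abel
      rw [← hcon, sub_self] at h'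
      exact h'
    have hinj : Function.Injective (fun t : Fin (r + 1) =>
        if h : (t : ℕ) < r - 1 then g (B ⟨t, by omega⟩) else
          if (t : ℕ) = r - 1 then c1 else c2) := by
      intro s t heq
      by_contra hst
      have hvne : (s : ℕ) ≠ (t : ℕ) := fun hc => hst (Fin.ext hc)
      simp only at heq
      by_cases hs1 : (s : ℕ) < r - 1 <;> by_cases ht1 : (t : ℕ) < r - 1
      · rw [dif_pos hs1, dif_pos ht1] at heq
        exact h1 ⟨s, by omega⟩ ⟨t, by omega⟩ (by simpa using by omega)
          (by simpa using by omega) (fun hc => hvne (by simpa using congrArg Fin.val hc)) heq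
      · rw [dif_pos hs1, dif_neg ht1] at heq
        by_cases ht2 : (t : ℕ) = r - 1
        · rw [if_pos ht2] at heq
          exact h2 ⟨s, by omega⟩ (by simpa using by omega) heq
        · rw [if_neg ht2] at heq
          exact h3 ⟨s, by omega⟩ (by simpa using by omega) heq
      · rw [dif_neg hs1, dif_pos ht1] at heq
        by_cases hs2 : (s : ℕ) = r - 1
        · rw [if_pos hs2] at heq
          exact h2 ⟨t, by omega⟩ (by simpa using by omega) heq.symm
        · rw [if_neg hs2] at heq
          exact h3 ⟨t, by omega⟩ (by simpa using by omega) heq.symm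
      · rw [dif_neg hs1, dif_neg ht1] at heq
        by_cases hs2 : (s : ℕ) = r - 1 <;> by_cases ht2 : (t : ℕ) = r - 1
        · exact hvne (by omega)
        · rw [if_pos hs2, if_neg ht2] at heq; exact hcc heq
        · rw [if_neg hs2, if_pos ht2] at heq; exact hcc heq.symm
        · have hs3 : (s : ℕ) = r := by have := s.isLt; omega
          have ht3 : (t : ℕ) = r := by have := t.isLt; omega
          exact hvne (by omega)
    have hle := Fintype.card_le_of_injective _ hinj
    rw [Fintype.card_fin, hcard] at hle
    omega
  -- contradiction at the edge x ~ y
  have hadjxy : (Gr r).Adj (P 2) (P 3) := adj_PP.2 ⟨by decide, by decide⟩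
  refine hg hadjxy ?_
  rw [nsum_x, nsum_y, keyB, add_comm, keyA]
/-- The chromatic number of `Gr r` is `r`. -/
theorem chrom (hr : 2 ≤ r) : (Gr r).chromaticNumber = r := by
  apply le_antisymm
  · -- upper bound: an explicit proper r-coloring
    have hcol : (Gr r).Colorable r := by
      refine ⟨SimpleGraph.Coloring.mk (fun w => match w with
        | Sum.inl (Sum.inl i) => i
        | Sum.inl (Sum.inr j) =>
            if h : (j : ℕ) = r - 1 then (⟨0, by omega⟩ : Fin r)
            else ⟨(j : ℕ) + 1, by have := j.isLt; omega⟩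
        | Sum.inr k =>
            if k = 0 then (⟨r - 1, by omega⟩ : Fin r)
            else if k = 3 then ⟨1, by omega⟩ else ⟨0, by omega⟩) ?_⟩
      intro a b hadj
      rcases a with (i | i) | k <;> rcases b with (j | j) | l
      · -- A, A
        exact fun hc => (adj_AA.1 hadj) (by simpa using hc)
      · exact absurd hadj (adj_AB.1 · )
      · -- A, P
        obtain ⟨hk, hi⟩ := adj_AP.1 hadj
        subst hk
        simp only [if_pos rfl]
        exact fun hc => hi (by simpa using congrArg Fin.val hc)
      · exact absurd hadj (adj_BA.1 ·)
      · -- B, B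
        have hij := adj_BB.1 hadj
        simp only
        by_cases h1 : (i : ℕ) = r - 1 <;> by_cases h2 : (j : ℕ) = r - 1
        · exact absurd (Fin.ext (h1.trans h2.symm)) hij
        · rw [dif_pos h1, dif_neg h2]
          intro hc; rw [Fin.mk.injEq] at hc; omega
        · rw [dif_neg h1, dif_pos h2]
          intro hc; rw [Fin.mk.injEq] at hc; omega
        · rw [dif_neg h1, dif_neg h2]
          intro hc; rw [Fin.mk.injEq] at hc
          exact hij (Fin.ext (by omega))
      · -- B, P
        obtain ⟨hk, hi⟩ := adj_BP.1 hadj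
        subst hk
        simp only [if_neg (show ¬ (1 : Fin 4) = 0 by decide),
          if_neg (show ¬ (1 : Fin 4) = 3 by decide), dif_neg hi]
        intro hc; rw [Fin.mk.injEq] at hc; omega
      · -- P, A
        obtain ⟨hk, hi⟩ := adj_PA.1 hadj
        subst hk
        simp only [if_pos rfl]
        exact fun hc => hi (by simpa using (congrArg Fin.val hc).symm)
      · -- P, B
        obtain ⟨hk, hi⟩ := adj_PB.1 hadj
        subst hk
        simp only [if_neg (show ¬ (1 : Fin 4) = 0 by decide),
          if_neg (show ¬ (1 : Fin 4) = 3 by decide), dif_neg hi]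
        intro hc; rw [Fin.mk.injEq] at hc; omega
      · -- P, P
        obtain ⟨hkl, hsum⟩ := adj_PP.1 hadj
        fin_cases k <;> fin_cases l <;>
          first
          | exact absurd rfl hkl
          | exact absurd rfl hsum
          | (intro hc
             have hv := congrArg Fin.val hc
             simp at hv
             try omega)
    simpa using hcol.chromaticNumber_le
  · -- lower bound: the clique A
    have hAinj : Function.Injective (A (r := r)) := by
      intro i j h
      simpa using h
    have hclique : (Gr r).IsClique ↑(Finset.univ.map ⟨A (r := r), hAinj⟩) := by
      intro a ha b hb hab
      simp only [Finset.coe_map, Set.mem_image, Finset.mem_coe] at ha hb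
      obtain ⟨i, -, rfl⟩ := ha
      obtain ⟨j, -, rfl⟩ := hb
      exact adj_AA.2 (fun hc => hab (by rw [hc]))
    have hc := hclique.card_le_chromaticNumber
    rwa [Finset.card_map, Finset.card_univ, Fintype.card_fin] at hc
/-- `Gr r` has an additive coloring over `ZMod (r+1)`. -/
theorem zmod_coloring (hr : 2 ≤ r) :
    ∃ g : Wr r → ZMod (r + 1), IsAddColoring (Gr r) g := by
  have hlt : r - 1 < r := by omega
  set lst : Fin r := ⟨r - 1, hlt⟩ with hlst
  have hl : (lst : ℕ) = r - 1 := rfl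
  -- basic cast facts
  have hcast : ∀ a b : ℕ, a < r + 1 → b < r + 1 → ((a : ZMod (r+1)) = b) → a = b := by
    intro a b ha hb h
    have hv := congrArg ZMod.val h
    rwa [ZMod.val_cast_of_lt ha, ZMod.val_cast_of_lt hb] at hv
  have n1 : (1 : ZMod (r + 1)) ≠ 0 := by
    intro h
    have := hcast 1 0 (by omega) (by omega) (by push_cast; exact h)
    omega
  have n2 : (2 : ZMod (r + 1)) ≠ 0 := by
    intro h
    have := hcast 2 0 (by omega) (by omega) (by push_cast; exact h)
    omega
  set Δn : ℕ := ∑ i ∈ Finset.range (r - 1), i with hΔn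
  set Δ : ZMod (r + 1) := (Δn : ZMod (r + 1)) with hΔ
  set p : ZMod (r + 1) := if Δ = 1 then 1 else 0 with hp
  set q : ZMod (r + 1) := if Δ + 1 = 0 then 1 else 0 with hq
  refine ⟨fun w => match w with
    | Sum.inl (Sum.inl i) => if (i : ℕ) = r - 1 then p - 1 else p + (i : ℕ)
    | Sum.inl (Sum.inr j) => if (j : ℕ) = r - 1 then q - 1 else q + (j : ℕ)
    | Sum.inr k => if k = 3 then 1 else 0, ?_⟩
  set g : Wr r → ZMod (r + 1) := fun w => match w with
    | Sum.inl (Sum.inl i) => if (i : ℕ) = r - 1 then p - 1 else p + (i : ℕ)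
    | Sum.inl (Sum.inr j) => if (j : ℕ) = r - 1 then q - 1 else q + (j : ℕ)
    | Sum.inr k => if k = 3 then 1 else 0 with hgdef
  have hgA : ∀ i : Fin r, g (A i) = if (i : ℕ) = r - 1 then p - 1 else p + (i : ℕ) := fun _ => rfl
  have hgB : ∀ j : Fin r, g (B j) = if (j : ℕ) = r - 1 then q - 1 else q + (j : ℕ) := fun _ => rfl
  have hgP0 : g (P 0) = 0 := rfl
  have hgP1 : g (P 1) = 0 := rfl
  have hgP2 : g (P 2) = 0 := rfl
  have hgP3 : g (P 3) = 1 := rfl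
  -- the value of the cast of `r`
  have hrcast : ((r : ℕ) : ZMod (r + 1)) = -1 := by
    have h0 : (((r + 1 : ℕ)) : ZMod (r + 1)) = 0 := ZMod.natCast_self _
    push_cast at h0
    linear_combination h0
  -- sum over a clique
  have hsum_gen : ∀ c : ZMod (r + 1),
      (∑ i : Fin r, (if (i : ℕ) = r - 1 then c - 1 else c + (i : ℕ))) = Δ - 1 - c := by
    intro c
    rw [← Finset.add_sum_erase _ _ (Finset.mem_univ lst)]
    rw [if_pos hl]
    have hterm : ∀ i ∈ Finset.univ.erase lst,
        (if (i : ℕ) = r - 1 then c - 1 else c + (i : ℕ)) = c + (i : ℕ) := by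
      intro i hi
      rw [if_neg]
      intro hc
      exact (Finset.mem_erase.1 hi).1 (Fin.ext (by rw [hc, hl]))
    rw [Finset.sum_congr rfl hterm, Finset.sum_add_distrib, Finset.sum_const,
      Finset.card_erase_of_mem (Finset.mem_univ lst), Finset.card_univ, Fintype.card_fin]
    have hnatsum : (∑ i ∈ Finset.univ.erase lst, ((i : ℕ) : ZMod (r + 1)))
        = (Δn : ZMod (r + 1)) := by
      rw [← Nat.cast_sum]
      congr 1
      have h1 : (∑ i ∈ Finset.univ.erase lst, (i : ℕ)) + (lst : ℕ)
          = ∑ i : Fin r, (i : ℕ) := Finset.sum_erase_add _ _ (Finset.mem_univ lst)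
      have h2 : (∑ i : Fin r, (i : ℕ)) = ∑ i ∈ Finset.range r, i :=
        Fin.sum_univ_eq_sum_range (fun i => i) r
      have h3 : (∑ i ∈ Finset.range r, i) = Δn + (r - 1) := by
        rw [hΔn, show r = (r - 1) + 1 by omega, Finset.sum_range_succ]
        simp
      omega
    rw [hnatsum]
    have hsmul : (r - 1) • c = -2 * c := by
      have : ((r - 1 : ℕ) : ZMod (r + 1)) = -2 := by
        rw [Nat.cast_sub (by omega), hrcast]
        push_cast
        ring
      rw [nsmul_eq_mul, this]
    rw [hsmul]
    ring
  have hTA : (∑ i : Fin r, g (A i)) = Δ - 1 - p := by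
    rw [show (∑ i : Fin r, g (A i))
        = ∑ i : Fin r, (if (i : ℕ) = r - 1 then p - 1 else p + (i : ℕ)) from rfl]
    exact hsum_gen p
  have hTB : (∑ i : Fin r, g (B i)) = Δ - 1 - q := by
    exact hsum_gen q
  -- cast helpers
  have castne1 : ∀ i : Fin r, (i : ℕ) ≠ r - 1 → ((i : ℕ) : ZMod (r + 1)) + 1 ≠ 0 := by
    intro i hi h
    have hlt' : (i : ℕ) + 1 < r + 1 := by have := i.isLt; omega
    have := hcast ((i : ℕ) + 1) 0 hlt' (by omega) (by push_cast; linear_combination h)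
    omega
  have castne2 : ∀ i : Fin r, (i : ℕ) ≠ r - 1 → ((i : ℕ) : ZMod (r + 1)) + 2 ≠ 0 := by
    intro i hi h
    have hlt' : (i : ℕ) + 2 < r + 1 := by have := i.isLt; omega
    have := hcast ((i : ℕ) + 2) 0 hlt' (by omega) (by push_cast; linear_combination h)
    omega
  -- injectivity of g on the cliques
  have gAinj : ∀ i j : Fin r, i ≠ j → g (A i) ≠ g (A j) := by
    intro i j hij
    rw [hgA, hgA]
    by_cases hi : (i : ℕ) = r - 1 <;> by_cases hj : (j : ℕ) = r - 1
    · exact absurd (Fin.ext (hi.trans hj.symm)) hij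
    · rw [if_pos hi, if_neg hj]
      intro h
      exact castne1 j hj (by linear_combination -h)
    · rw [if_neg hi, if_pos hj]
      intro h
      exact castne1 i hi (by linear_combination h)
    · rw [if_neg hi, if_neg hj]
      intro h
      have hvij : ((i : ℕ) : ZMod (r + 1)) = ((j : ℕ) : ZMod (r + 1)) := by
        linear_combination h
      exact hij (Fin.ext (hcast _ _ (by omega) (by omega) hvij))
  have gBinj : ∀ i j : Fin r, i ≠ j → g (B i) ≠ g (B j) := by
    intro i j hij
    rw [hgB, hgB]
    by_cases hi : (i : ℕ) = r - 1 <;> by_cases hj : (j : ℕ) = r - 1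
    · exact absurd (Fin.ext (hi.trans hj.symm)) hij
    · rw [if_pos hi, if_neg hj]
      intro h
      exact castne1 j hj (by linear_combination -h)
    · rw [if_neg hi, if_pos hj]
      intro h
      exact castne1 i hi (by linear_combination h)
    · rw [if_neg hi, if_neg hj]
      intro h
      have hvij : ((i : ℕ) : ZMod (r + 1)) = ((j : ℕ) : ZMod (r + 1)) := by
        linear_combination h
      exact hij (Fin.ext (hcast _ _ (by omega) (by omega) hvij))
  -- the neighborhood sums
  have hnA : ∀ i : Fin r, nsum (Gr r) g (A i) = (Δ - 1 - p) - g (A i) := by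
    intro i
    rw [nsum_A, hTA, hgP0, ite_self, add_zero]
  have hnB : ∀ i : Fin r, nsum (Gr r) g (B i) = (Δ - 1 - q) - g (B i) := by
    intro i
    rw [nsum_B, hTB, hgP1, ite_self, add_zero]
  have hnu : nsum (Gr r) g (P 0) = Δ - 2 * p := by
    rw [nsum_u g lst hl, hTA, hgA lst, if_pos hl, hgP1, hgP2]
    ring
  have hnv : nsum (Gr r) g (P 1) = Δ - 2 * q + 1 := by
    rw [nsum_v g lst hl, hTB, hgB lst, if_pos hl, hgP0, hgP3]
    ring
  have hnx : nsum (Gr r) g (P 2) = 1 := by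
    rw [nsum_x, hgP0, hgP3, zero_add]
  have hny : nsum (Gr r) g (P 3) = 0 := by
    rw [nsum_y, hgP1, hgP2, add_zero]
  -- the three special inequalities
  have h3z : Δ = 1 → (3 : ZMod (r + 1)) ≠ 0 := by
    intro hΔ1 h
    have hdvd : (r + 1) ∣ 3 := by
      have := (ZMod.natCast_eq_zero_iff 3 (r + 1)).1 (by push_cast; exact h)
      exact this
    have hle3 : r + 1 ≤ 3 := Nat.le_of_dvd (by norm_num) hdvd
    have hr2 : r = 2 := by omega
    have hΔn0 : Δn = 0 := by
      rw [hΔn, show r - 1 = 1 by omega]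
      simp
    apply n1
    rw [← hΔ1, hΔ, hΔn0]
    simp
  have key6 : Δ - 2 * p ≠ 1 := by
    by_cases hΔ1 : Δ = 1
    · rw [hp, if_pos hΔ1, hΔ1]
      intro h
      exact n2 (by linear_combination -h)
    · rw [hp, if_neg hΔ1]
      intro h
      exact hΔ1 (by linear_combination h)
  have key7 : Δ - 2 * q + 1 ≠ 0 := by
    by_cases hΔ2 : Δ + 1 = 0
    · rw [hq, if_pos hΔ2]
      intro h
      exact n2 (by linear_combination hΔ2 - h)
    · rw [hq, if_neg hΔ2]
      intro h
      exact hΔ2 (by linear_combination h)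
  have key5 : Δ - 2 * p ≠ Δ - 2 * q + 1 := by
    by_cases hΔ1 : Δ = 1 <;> by_cases hΔ2 : Δ + 1 = 0
    · exact absurd (show (2 : ZMod (r + 1)) = 0 by linear_combination hΔ2 - hΔ1) n2
    · rw [hp, hq, if_pos hΔ1, if_neg hΔ2]
      intro h
      exact h3z hΔ1 (by linear_combination -h)
    · rw [hp, hq, if_neg hΔ1, if_pos hΔ2]
      intro h
      exact n1 (by linear_combination h)
    · rw [hp, hq, if_neg hΔ1, if_neg hΔ2]
      intro h
      exact n1 (by linear_combination -h)
  -- verify all edges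
  intro a b hadj
  rcases a with (i | i) | k <;> rcases b with (j | j) | l
  · -- A, A
    have hij := adj_AA.1 hadj
    rw [hnA i, hnA j]
    intro h
    exact gAinj i j hij (by linear_combination -h)
  · exact (adj_AB.1 hadj).elim
  · -- A, P
    obtain ⟨hk, hi⟩ := adj_AP.1 hadj
    subst hk
    rw [hnA i, hnu, hgA i, if_neg hi]
    intro h
    exact castne1 i hi (by linear_combination -h)
  · exact (adj_BA.1 hadj).elim
  · -- B, B
    have hij := adj_BB.1 hadj
    rw [hnB i, hnB j]
    intro h
    exact gBinj i j hij (by linear_combination -h)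
  · -- B, P
    obtain ⟨hk, hi⟩ := adj_BP.1 hadj
    subst hk
    rw [hnB i, hnv, hgB i, if_neg hi]
    intro h
    exact castne2 i hi (by linear_combination -h)
  · -- P, A
    obtain ⟨hk, hi⟩ := adj_PA.1 hadj
    subst hk
    rw [hnA j, hnu, hgA j, if_neg hi]
    intro h
    exact castne1 j hi (by linear_combination h)
  · -- P, B
    obtain ⟨hk, hi⟩ := adj_PB.1 hadj
    subst hk
    rw [hnB j, hnv, hgB j, if_neg hi]
    intro h
    exact castne2 j hi (by linear_combination h)
  · -- P, P
    obtain ⟨hkl, hsum⟩ := adj_PP.1 hadj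
    have hnu' : ∀ m : Fin 4, (m : ℕ) = 0 → nsum (Gr r) g (Sum.inr m) = Δ - 2 * p := by
      intro m hm
      have hm' : m = 0 := Fin.ext (by simpa using hm)
      subst hm'
      exact hnu
    have hnv' : ∀ m : Fin 4, (m : ℕ) = 1 → nsum (Gr r) g (Sum.inr m) = Δ - 2 * q + 1 := by
      intro m hm
      have hm' : m = 1 := Fin.ext (by simpa using hm)
      subst hm'
      exact hnv
    have hnx' : ∀ m : Fin 4, (m : ℕ) = 2 → nsum (Gr r) g (Sum.inr m) = 1 := by
      intro m hm
      have hm' : m = 2 := Fin.ext (by simpa using hm)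
      subst hm'
      exact hnx
    have hny' : ∀ m : Fin 4, (m : ℕ) = 3 → nsum (Gr r) g (Sum.inr m) = 0 := by
      intro m hm
      have hm' : m = 3 := Fin.ext (by simpa using hm)
      subst hm'
      exact hny
    have hkl' : (k : ℕ) ≠ (l : ℕ) := fun h => hkl (Fin.ext h)
    have hk4 : (k : ℕ) < 4 := k.isLt
    have hl4 : (l : ℕ) < 4 := l.isLt
    have hkc : (k : ℕ) = 0 ∨ (k : ℕ) = 1 ∨ (k : ℕ) = 2 ∨ (k : ℕ) = 3 := by omega
    have hlc : (l : ℕ) = 0 ∨ (l : ℕ) = 1 ∨ (l : ℕ) = 2 ∨ (l : ℕ) = 3 := by omega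
    rcases hkc with hkv | hkv | hkv | hkv <;> rcases hlc with hlv | hlv | hlv | hlv <;>
      first
      | exact absurd (by omega) hkl'
      | exact absurd (by omega) hsum
      | (rw [hnu' k hkv, hnv' l hlv]; exact key5)
      | (rw [hnv' k hkv, hnu' l hlv]; exact fun h => key5 h.symm)
      | (rw [hnu' k hkv, hnx' l hlv]; exact key6)
      | (rw [hnx' k hkv, hnu' l hlv]; exact fun h => key6 h.symm)
      | (rw [hnv' k hkv, hny' l hlv]; exact key7)
      | (rw [hny' k hkv, hnv' l hlv]; exact fun h => key7 h.symm)
      | (rw [hnx' k hkv, hny' l hlv]; exact n1)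
      | (rw [hny' k hkv, hnx' l hlv]; exact fun h => n1 h.symm)
end Gadget


/-- For every `r ≥ 2` there is a finite simple graph `G` with chromatic number `r`
that has no additive coloring over any finite abelian group of order `r`, but has an
additive coloring over `ℤ_{r+1}`. -/
theorem exists_graph_no_additive_coloring_over_groups_of_order_chi
    (r : ℕ) (hr : 2 ≤ r) :
    ∃ (n : ℕ) (G : SimpleGraph (Fin n)),
      G.chromaticNumber = r ∧
      (∀ (Γ : Type) [AddCommGroup Γ] [Fintype Γ], Fintype.card Γ = r →
        ¬∃ f : Fin n → Γ, IsAddColoring G f) ∧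
      (∃ f : Fin n → ZMod (r + 1), IsAddColoring G f) := by
  refine ⟨r + r + 4, ?_⟩
  have e : Wr r ≃ Fin (r + r + 4) :=
    (Equiv.sumCongr finSumFinEquiv (Equiv.refl (Fin 4))).trans finSumFinEquiv
  refine ⟨(Gadget.Gr r).map e.toEmbedding, ?_, ?_, ?_⟩
  · -- chromatic number
    have iso : Gadget.Gr r ≃g (Gadget.Gr r).map e.toEmbedding :=
      { e with map_rel_iff' := fun {a b} => SimpleGraph.map_adj_apply }
    have h1 := SimpleGraph.chromaticNumber_mono_of_hom iso.toEmbedding.toHom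
    have h2 := SimpleGraph.chromaticNumber_mono_of_hom iso.symm.toEmbedding.toHom
    rw [le_antisymm h2 h1, Gadget.chrom hr]
  · -- no coloring over groups of order r
    intro Γ _ _ hcard hex
    obtain ⟨f, hf⟩ := hex
    exact Gadget.no_coloring hr Γ hcard (f ∘ e)
      ((isAddColoring_map (Gadget.Gr r) e f).1 hf)
  · -- coloring over ZMod (r+1)
    obtain ⟨g, hg⟩ := Gadget.zmod_coloring hr
    refine ⟨g ∘ e.symm, ?_⟩
    rw [isAddColoring_map (Gadget.Gr r) e (g ∘ ⇑e.symm)]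
    have hcomp : (g ∘ ⇑e.symm) ∘ ⇑e = g := by
      funext z
      simp
    rwa [hcomp]
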